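/- For every C > 0 there exist vectors v, g, h ∈ ℝ² such that ‖v‖ ≤ C and ‖v − (g − h)‖ ≤ ‖v‖, yet ‖v − (Π₁(g) − Π₁(h))‖ > C, where Π₁(u) := u·min(1/‖u‖, 1) denotes Euclidean clipping to the unit ball (with Π₁(0) = 0). In particular, truncating the gradients of a contractive coupled step (with post-truncation difference bound C, allowing gradient norms up to 1 after clipping) can destroy contractivity. -/

import Mathlib

/-- Euclidean clipping to the unit ball: `Π₁(u) = u·min(1/‖u‖, 1)`,
with `Π₁(0) = 0` (division by zero yields `0` in Lean). -/
noncomputable def unitClip (u : EuclideanSpace ℝ (Fin 2)) : EuclideanSpace ℝ (Fin 2) :=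
  (min (1 / ‖u‖) 1) • u

noncomputable def V (a b : ℝ) : EuclideanSpace ℝ (Fin 2) := !₂[a, b]

lemma norm_V (a b : ℝ) : ‖V a b‖ = Real.sqrt (a^2 + b^2) := by
  rw [EuclideanSpace.norm_eq]
  simp [V, Fin.sum_univ_two, sq_abs, sq]

lemma sub_V (a b c d : ℝ) : V a b - V c d = V (a-c) (b-d) := by
  ext i; fin_cases i <;> simp [V]

lemma smul_V (t a b : ℝ) : t • V a b = V (t*a) (t*b) := by
  ext i; fin_cases i <;> simp [V]

/-- For every `C > 0` there are vectors `v, g, h ∈ ℝ²` with `‖v‖ ≤ C` and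
`‖v − (g − h)‖ ≤ ‖v‖`, yet `‖v − (Π₁(g) − Π₁(h))‖ > C`: clipping the gradients of a
contractive coupled step can destroy contractivity. -/
theorem clipping_destroys_contraction :
    ∀ C : ℝ, 0 < C →
      ∃ v g h : EuclideanSpace ℝ (Fin 2),
        ‖v‖ ≤ C ∧ ‖v - (g - h)‖ ≤ ‖v‖ ∧ C < ‖v - (unitClip g - unitClip h)‖ := by
  intro C hC
  set s := Real.sqrt (2*C+1) with hs
  have h2C : (0:ℝ) ≤ 2*C+1 := by linarith
  have hs2 : s^2 = 2*C+1 := Real.sq_sqrt h2C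
  have hs1 : 1 ≤ s := by
    rw [show (1:ℝ) = Real.sqrt 1 by simp [Real.sqrt_one]]
    exact Real.sqrt_le_sqrt (by linarith)
  have hs0 : 0 < s := by linarith
  have hsC : s < C + 1 := by
    nlinarith [hs2, hs0, hC]
  have hC1 : (0:ℝ) < C + 1 := by linarith
  refine ⟨V (-C) 0, V 1 0, V ((2*C+1)/(C+1)) (C*s/(C+1)), ?_, ?_, ?_⟩
  · rw [norm_V]
    rw [show (-C)^2 + 0^2 = C^2 by ring, Real.sqrt_sq hC.le]
  · rw [sub_V, sub_V, norm_V, norm_V]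
    have h1 : (-C - (1 - (2*C+1)/(C+1)))^2 + (0 - (0 - C*s/(C+1)))^2 = C^2 := by
      field_simp
      nlinarith [hs2]
    rw [h1, show (-C)^2 + 0^2 = C^2 by ring]
  · have hng : ‖V 1 0‖ = 1 := by rw [norm_V]; simp
    have hg : unitClip (V 1 0) = V 1 0 := by
      rw [unitClip, hng]; simp
    have hnh : ‖V ((2*C+1)/(C+1)) (C*s/(C+1))‖ = s := by
      rw [norm_V]
      rw [show ((2*C+1)/(C+1))^2 + (C*s/(C+1))^2 = s^2 by
        field_simp; nlinarith [hs2]]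
      exact Real.sqrt_sq hs0.le
    have hh : unitClip (V ((2*C+1)/(C+1)) (C*s/(C+1))) =
        V ((1/s)*((2*C+1)/(C+1))) ((1/s)*(C*s/(C+1))) := by
      rw [unitClip, hnh, min_eq_left (by rw [div_le_one hs0]; exact hs1), smul_V]
    rw [hg, hh, sub_V, sub_V, norm_V]
    have e1 : (1/s)*((2*C+1)/(C+1)) = s/(C+1) := by
      field_simp; nlinarith [hs2]
    have e2 : (1/s)*(C*s/(C+1)) = C/(C+1) := by
      field_simp
    rw [e1, e2, show (C < _) ↔ _ from Real.lt_sqrt hC.le]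
    rw [show (-C - (1 - s/(C+1)))^2 + (0 - (0 - C/(C+1)))^2
        = ((C+1) - s/(C+1))^2 + (C/(C+1))^2 by ring]
    have key : C^2 * (C+1)^2 < ((C+1)^2 - s)^2 + C^2 := by
      nlinarith [hs2, hsC, hC, hC1, sq_nonneg ((C+1) - s)]
    have : ((C+1) - s/(C+1))^2 + (C/(C+1))^2 = (((C+1)^2 - s)^2 + C^2)/(C+1)^2 := by
      field_simp
    rw [this]
    rw [lt_div_iff₀ (by positivity)]
    linarith [key]
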